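/- If μ ∈ (-3/4, 1/4) and y₀ ∈ (-1/4, 1/4), then the orbit of y₀ under the quadratic map f_μ(y) = y² + μ converges to the attracting fixed point y* = (1 - √(1-4μ))/2; that is, the interval (-1/4, 1/4) is contained in the basin of attraction of the sink. -/

import Mathlib

open Filter Set


lemma twostep_tendsto (f : ℝ → ℝ) (I : Set ℝ) (hI : ∀ y ∈ I, f y ∈ I)
    (a q : ℝ) (hq0 : 0 ≤ q) (hq1 : q < 1)
    (hcontr : ∀ y ∈ I, |f (f y) - a| ≤ q * |y - a|)
    (y₁ : ℝ) (hy₁ : y₁ ∈ I) :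
    Tendsto (fun n : ℕ => f^[n] y₁) atTop (nhds a) := by
  have hx : ∀ n : ℕ, f^[n] y₁ ∈ I := by
    intro n
    induction n with
    | zero => exact hy₁
    | succ n ih => rw [Function.iterate_succ_apply']; exact hI _ ih
  set M : ℝ := max |f^[0] y₁ - a| |f^[1] y₁ - a| with hM
  have hM0 : 0 ≤ M := le_trans (abs_nonneg _) (le_max_left _ _)
  have key : ∀ k : ℕ, |f^[2*k] y₁ - a| ≤ M * q ^ k ∧ |f^[2*k+1] y₁ - a| ≤ M * q ^ k := by
    intro k
    induction k with
    | zero => simpa using ⟨le_max_left _ _, le_max_right _ _⟩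
    | succ k ih =>
      have e1 : f^[2*(k+1)] y₁ = f (f (f^[2*k] y₁)) := by
        rw [show 2*(k+1) = (2*k) + 1 + 1 by ring, Function.iterate_succ_apply',
          Function.iterate_succ_apply']
      have e2 : f^[2*(k+1)+1] y₁ = f (f (f^[2*k+1] y₁)) := by
        rw [show 2*(k+1)+1 = (2*k+1) + 1 + 1 by ring, Function.iterate_succ_apply',
          Function.iterate_succ_apply']
      constructor
      · rw [e1]
        calc |f (f (f^[2*k] y₁)) - a| ≤ q * |f^[2*k] y₁ - a| := hcontr _ (hx _)
          _ ≤ q * (M * q ^ k) := by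
              exact mul_le_mul_of_nonneg_left ih.1 hq0
          _ = M * q ^ (k+1) := by ring
      · rw [e2]
        calc |f (f (f^[2*k+1] y₁)) - a| ≤ q * |f^[2*k+1] y₁ - a| := hcontr _ (hx _)
          _ ≤ q * (M * q ^ k) := by
              exact mul_le_mul_of_nonneg_left ih.2 hq0
          _ = M * q ^ (k+1) := by ring
  have bound : ∀ n : ℕ, |f^[n] y₁ - a| ≤ M * q ^ (n / 2) := by
    intro n
    rcases Nat.even_or_odd n with ⟨k, hk⟩ | ⟨k, hk⟩
    · have h2 : n / 2 = k := by omega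
      have h3 : n = 2 * k := by omega
      rw [h2, h3]; exact (key k).1
    · have h2 : n / 2 = k := by omega
      have h3 : n = 2 * k + 1 := by omega
      rw [h2, h3]; exact (key k).2
  have h1 : Tendsto (fun k : ℕ => q ^ k) atTop (nhds 0) :=
    tendsto_pow_atTop_nhds_zero_of_lt_one hq0 hq1
  have h2 : Tendsto (fun n : ℕ => n / 2) atTop atTop :=
    tendsto_atTop_atTop.2 (fun b => ⟨2 * b, fun n hn => by omega⟩)
  have h3 : Tendsto (fun n : ℕ => M * q ^ (n / 2)) atTop (nhds 0) := by
    have := (h1.comp h2).const_mul M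
    simpa using this
  rw [tendsto_iff_dist_tendsto_zero]
  apply squeeze_zero (fun n => dist_nonneg) _ h3
  intro n
  rw [Real.dist_eq]
  exact bound n

lemma keyB (a y : ℝ) (ha1 : -(1/2) < a) (ha2 : a < 0)
    (hy1 : a - a^2 ≤ y) (hy2 : y ≤ -a) :
    (y + a) * (y^2 + 2*a - a^2) < 1 := by
  nlinarith [sq_nonneg (y - a), sq_nonneg (y + a), sq_nonneg (y + 2*a), sq_nonneg y,
    mul_nonneg (sub_nonneg.2 hy1) (sub_nonneg.2 hy2),
    mul_pos (by linarith : (0:ℝ) < 1 + 2*a) (by linarith : (0:ℝ) < -a),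
    sq_nonneg (y - a + a^2), sq_nonneg (1 + 2*a)]

set_option maxHeartbeats 4000000 in
theorem quadratic_basin_of_attraction (μ : ℝ) (hμ : μ ∈ Ioo (-3 / 4 : ℝ) (1 / 4))
    (y₀ : ℝ) (hy₀ : y₀ ∈ Ioo (-1 / 4 : ℝ) (1 / 4)) :
    Tendsto (fun n : ℕ => (fun y : ℝ => y ^ 2 + μ)^[n] y₀) atTop
      (nhds ((1 - Real.sqrt (1 - 4 * μ)) / 2)) := by
  obtain ⟨hμ1, hμ2⟩ := hμ
  obtain ⟨hy01, hy02⟩ := hy₀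
  set f : ℝ → ℝ := fun y => y ^ 2 + μ with hf
  set s : ℝ := Real.sqrt (1 - 4 * μ) with hsdef
  set a : ℝ := (1 - s) / 2 with hadef
  have hs2 : s ^ 2 = 1 - 4 * μ := by rw [hsdef]; exact Real.sq_sqrt (by linarith)
  have hs0 : 0 < s := by rw [hsdef]; exact Real.sqrt_pos.2 (by linarith)
  clear_value f s a
  have hslt2 : s < 2 := by nlinarith [hs2, hs0]
  have hμs : μ = (1 - s ^ 2) / 4 := by linarith
  have hfix : a ^ 2 + μ = a := by rw [hadef]; linear_combination hs2 / 4
  have hμa : μ ≤ a := by nlinarith [hfix, sq_nonneg a]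
  set B : ℝ := max (max a (μ + 1/16)) (μ ^ 2 + μ) with hBdef
  clear_value B
  have hBa : a ≤ B := by rw [hBdef]; exact le_trans (le_max_left _ _) (le_max_left _ _)
  have hBμ : μ + 1/16 ≤ B := by rw [hBdef]; exact le_trans (le_max_right _ _) (le_max_left _ _)
  have hBf : μ ^ 2 + μ ≤ B := by rw [hBdef]; exact le_max_right _ _
  -- B + a < 1
  have hBlt : B + a < 1 := by
    have c1 : a + a < 1 := by rw [hadef]; linarith
    have c2 : (μ + 1/16) + a < 1 := by rw [hadef, hμs]; nlinarith [hs0, sq_nonneg s]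
    have c3 : (μ ^ 2 + μ) + a < 1 := by
      rw [hadef, hμs]
      have key : (0:ℝ) < (s+1)*(s+1)*(s+1)*(3-s) :=
        mul_pos (mul_pos (mul_pos (by linarith) (by linarith)) (by linarith)) (by linarith)
      nlinarith [key]
    rw [hBdef]
    rcases max_cases (max a (μ + 1/16)) (μ ^ 2 + μ) with ⟨h, _⟩ | ⟨h, _⟩
    · rw [h]
      rcases max_cases a (μ + 1/16) with ⟨h', _⟩ | ⟨h', _⟩ <;> rw [h'] <;> linarith
    · rw [h]; exact c3
  have hBB : B ^ 2 + μ ≤ B := by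
    nlinarith [mul_nonneg (sub_nonneg.2 hBa) (by linarith : (0:ℝ) ≤ 1 - a - B), hfix]
  -- invariance
  have hI : ∀ y ∈ Icc μ B, f y ∈ Icc μ B := by
    intro y hy
    obtain ⟨h1, h2⟩ := hy
    constructor
    · simp only [hf]
      linarith [sq_nonneg y]
    · simp only [hf]
      have hid : (B - μ) * (B - (y^2 + μ)) =
          (B - y)*(B - (μ^2+μ)) + (y - μ)*(B - (B^2+μ)) + (B-y)*(y-μ)*(B-μ) := by ring
      have p1 : 0 ≤ (B - y)*(B - (μ^2+μ)) := mul_nonneg (by linarith) (by linarith)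
      have p2 : 0 ≤ (y - μ)*(B - (B^2+μ)) := mul_nonneg (by linarith) (by linarith)
      have p3 : 0 ≤ (B-y)*(y-μ)*(B-μ) :=
        mul_nonneg (mul_nonneg (by linarith) (by linarith)) (by linarith)
      have hBμpos : (0:ℝ) < B - μ := by linarith
      by_contra hcon
      push_neg at hcon
      have hlt : (B - μ) * (B - (y^2 + μ)) < 0 :=
        mul_neg_of_pos_of_neg hBμpos (by linarith)
      rw [hid] at hlt
      linarith [p1, p2, p3]
  have haI : a ∈ Icc μ B := ⟨hμa, hBa⟩
  have hy₀sq : y₀ ^ 2 ≤ 1/16 := by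
    have h := mul_pos (show (0:ℝ) < 1/4 - y₀ by linarith) (show (0:ℝ) < 1/4 + y₀ by linarith)
    linarith [h, (by ring : (1/4 - y₀) * (1/4 + y₀) = 1/16 - y₀^2)]
  have hy₁ : f y₀ ∈ Icc μ B := by
    constructor
    · simp only [hf]
      linarith [sq_nonneg y₀]
    · simp only [hf]
      linarith
  -- one step expansion
  have hstep : ∀ y : ℝ, f y - a = (y + a) * (y - a) := by
    intro y
    simp only [hf]
    linear_combination hfix
  -- get contraction constant
  have main : ∃ q : ℝ, 0 ≤ q ∧ q < 1 ∧ ∀ y ∈ Icc μ B, |f (f y) - a| ≤ q * |y - a| := by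
    rcases lt_or_ge μ (-(1/4)) with hcase | hcase
    · -- two-step case, μ < -1/4
      have hs2' : 2 < s ^ 2 := by linarith
      have hs1 : 1 < s := by
        by_contra h
        push_neg at h
        have h2 : s * s ≤ 1 * 1 := mul_le_mul h h (le_of_lt hs0) zero_le_one
        linarith [h2, (by ring : s * s = s^2)]
      have ha0 : a < 0 := by rw [hadef]; linarith
      have ha12 : -(1/2) < a := by rw [hadef]; linarith
      have hμeq : μ = a - a ^ 2 := by linarith [hfix]
      have e1 : a ≤ μ ^ 2 + μ := by
        rw [hμeq]
        have p : (0:ℝ) ≤ a^2 * (-a) * (2 - a) :=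
          mul_nonneg (mul_nonneg (sq_nonneg a) (by linarith)) (by linarith)
        linarith [p, (by ring : a^2 * (-a) * (2 - a) = (a - a^2)^2 + (a - a^2) - a)]
      have e2 : μ + 1/16 ≤ μ ^ 2 + μ := by
        have h := mul_pos (show (0:ℝ) < -(1/4) - μ by linarith) (show (0:ℝ) < 1/4 - μ by linarith)
        linarith [h, (by ring : (-(1/4) - μ) * (1/4 - μ) = μ^2 - 1/16)]
      have hBeq : B = μ ^ 2 + μ := by
        rw [hBdef, max_eq_right (max_le e1 e2)]
      have hBneg : B < -a := by
        rw [hBeq, hμs, hadef]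
        have hs4 : s * s < 2 * 2 := mul_lt_mul'' hslt2 hslt2 (le_of_lt hs0) (le_of_lt hs0)
        have hs4' : s^2 < 4 := by linarith [hs4, (by ring : s * s = s^2)]
        have p : (0:ℝ) ≤ (s^2 - 2) * (4 - s^2) :=
          mul_nonneg (by linarith) (by linarith)
        linarith [p, hs1, (by ring : (s^2 - 2) * (4 - s^2) = -(s^2*s^2) + 6*s^2 - 8)]
      set ψ : ℝ → ℝ := fun y => (y + a) * (f y + a) with hψ
      clear_value ψ
      have hψcont : ContinuousOn ψ (Icc μ B) := by
        rw [hψ, hf]; fun_prop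
      obtain ⟨c, hcI, hcmax⟩ := (isCompact_Icc (a := μ) (b := B)).exists_isMaxOn
        ⟨a, haI⟩ hψcont
      have hψa : ψ a = 4 * a ^ 2 := by
        simp only [hψ, hf]
        rw [hfix]; ring
      refine ⟨ψ c, ?_, ?_, ?_⟩
      · have h0 : ψ a ≤ ψ c := hcmax haI
        rw [hψa] at h0
        linarith [sq_nonneg a, h0]
      · have h1 := keyB a c ha12 ha0 (by rw [← hμeq]; exact hcI.1)
          (by linarith [hcI.2])
        show ψ c < 1
        calc ψ c = (c + a) * (c ^ 2 + 2*a - a^2) := by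
              simp only [hψ, hf]
              rw [hμeq]; ring
          _ < 1 := h1
      · intro y hy
        have hyI2 : f y ∈ Icc μ B := hI y hy
        have hya : y + a < 0 := by linarith [hy.2, hBneg]
        have hfya : f y + a < 0 := by linarith [hyI2.2, hBneg]
        have e : |f (f y) - a| = ((y + a) * (f y + a)) * |y - a| := by
          rw [hstep (f y), abs_mul, hstep y, abs_mul, abs_of_neg hfya, abs_of_neg hya]
          ring
        rw [e]
        have hmax : (y + a) * (f y + a) ≤ ψ c := by
          have := hcmax hy
          simpa [hψ] using this
        exact mul_le_mul_of_nonneg_right hmax (abs_nonneg _)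
    · -- one-step case, μ ≥ -1/4
      have hs2' : s ^ 2 ≤ 2 := by linarith
      have hsle : s ≤ 2 := le_of_lt hslt2
      set q : ℝ := max |μ + a| |B + a| with hq
      have hq0 : 0 ≤ q := le_trans (abs_nonneg _) (le_max_left _ _)
      have habs1 : |μ + a| < 1 := by
        rw [abs_lt]
        constructor
        · rw [hadef, hμs]; linarith
        · rw [hadef, hμs]; linarith [hs0, sq_nonneg s]
      have habs2 : |B + a| < 1 := by
        rw [abs_lt]
        refine ⟨?_, hBlt⟩
        have h2a : a + a ≤ B + a := by linarith
        have : -1 < a + a := by rw [hadef]; linarith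
        linarith
      have hq1 : q < 1 := max_lt habs1 habs2
      have hqq : ∀ y ∈ Icc μ B, |y + a| ≤ q := by
        intro y hy
        rw [abs_le]
        constructor
        · have h1 : -|μ + a| ≤ μ + a := neg_abs_le _
          have h2 : |μ + a| ≤ q := le_max_left _ _
          linarith [hy.1]
        · have h1 : B + a ≤ |B + a| := le_abs_self _
          have h2 : |B + a| ≤ q := le_max_right _ _
          linarith [hy.2]
      refine ⟨q * q, mul_nonneg hq0 hq0, ?_, ?_⟩
      · have h := mul_le_mul_of_nonneg_left hq1.le hq0
        linarith [h]
      · intro y hy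
        have hyI2 : f y ∈ Icc μ B := hI y hy
        have e1 : |f (f y) - a| = |f y + a| * (|y + a| * |y - a|) := by
          rw [hstep (f y), abs_mul, hstep y, abs_mul]
        rw [e1]
        calc |f y + a| * (|y + a| * |y - a|)
            ≤ q * (q * |y - a|) := by
              apply mul_le_mul (hqq _ hyI2) ?_ (by positivity) hq0
              exact mul_le_mul_of_nonneg_right (hqq _ hy) (abs_nonneg _)
          _ = (q * q) * |y - a| := by ring
  obtain ⟨q, hq0, hq1, hcontr⟩ := main
  have htend : Tendsto (fun n : ℕ => f^[n] (f y₀)) atTop (nhds a) :=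
    twostep_tendsto f (Icc μ B) hI a q hq0 hq1 hcontr (f y₀) hy₁
  have hshift : Tendsto (fun n : ℕ => f^[n + 1] y₀) atTop (nhds a) := by
    simpa [Function.iterate_succ_apply] using htend
  exact (tendsto_add_atTop_iff_nat (f := fun n : ℕ => f^[n] y₀) 1).1 hshift
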